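/- Let X_1, X_2, ... be i.i.d. random vectors taking values in ℕ₀² defined on a probability space, with probability generating function v(t) = E[t₁^{X₁} t₂^{X₂}] defined for t = (t₁,t₂) in a set W ⊆ ℝ². Let v_n(t) = (1/n) ∑_{i=1}^n t₁^{X_{i1}} t₂^{X_{i2}} denote the empirical probability generating function. If 0 ≤ b_j ≤ c_j < ∞ for j = 1,2 are such that the rectangle Q = [b₁,c₁] × [b₂,c₂] ⊆ W, then sup_{t ∈ Q} |v_n(t) − v(t)| → 0 almost surely as n → ∞. -/

import Mathlib

open MeasureTheory ProbabilityTheory Filter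

/-- Let `X 1, X 2, ...` be i.i.d. random vectors with values in `ℕ₀²`,
with probability generating function `v t = E[t₁ ^ X₁ * t₂ ^ X₂]` defined (finite) for
`t ∈ W ⊆ ℝ²`.  If `0 ≤ bⱼ ≤ cⱼ < ∞` and the rectangle `Q = [b₁,c₁] × [b₂,c₂] ⊆ W`,
then `sup_{t ∈ Q} |vₙ t − v t| → 0` almost surely, where `vₙ` is the empirical pgf. -/
theorem epgf_unif_convergence
    {Ω : Type*} [MeasurableSpace Ω] (P : Measure Ω) [IsProbabilityMeasure P]
    (X : ℕ → Ω → ℕ × ℕ) (hmeas : ∀ i, Measurable (X i))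
    (hindep : iIndepFun X P)
    (hident : ∀ i, IdentDistrib (X i) (X 0) P P)
    (W : Set (ℝ × ℝ))
    (hW_int : ∀ t ∈ W, Integrable (fun ω => t.1 ^ (X 0 ω).1 * t.2 ^ (X 0 ω).2) P)
    (v : ℝ × ℝ → ℝ)
    (hv : ∀ t ∈ W, v t = ∫ ω, t.1 ^ (X 0 ω).1 * t.2 ^ (X 0 ω).2 ∂P)
    (b₁ c₁ b₂ c₂ : ℝ) (hb₁ : 0 ≤ b₁) (hbc₁ : b₁ ≤ c₁) (hb₂ : 0 ≤ b₂) (hbc₂ : b₂ ≤ c₂)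
    (hQW : Set.Icc b₁ c₁ ×ˢ Set.Icc b₂ c₂ ⊆ W) :
    ∀ᵐ ω ∂P, Tendsto
      (fun n : ℕ => ⨆ t : (Set.Icc b₁ c₁ ×ˢ Set.Icc b₂ c₂ : Set (ℝ × ℝ)),
        |(n : ℝ)⁻¹ * ∑ i ∈ Finset.range n,
            (t : ℝ × ℝ).1 ^ (X i ω).1 * (t : ℝ × ℝ).2 ^ (X i ω).2 - v t|)
      atTop (nhds 0) := by
  -- the compact rectangle
  set Q : Set (ℝ × ℝ) := Set.Icc b₁ c₁ ×ˢ Set.Icc b₂ c₂ with hQdef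
  haveI : CompactSpace Q := isCompact_iff_compactSpace.mp (isCompact_Icc.prod isCompact_Icc)
  haveI : Nonempty Q := ⟨⟨(b₁, b₂), ⟨⟨le_refl _, hbc₁⟩, ⟨le_refl _, hbc₂⟩⟩⟩⟩
  letI : MeasurableSpace C(Q, ℝ) := borel C(Q, ℝ)
  haveI : BorelSpace C(Q, ℝ) := ⟨rfl⟩
  -- the map from values of X to continuous functions on Q
  let φ : ℕ × ℕ → C(Q, ℝ) := fun p =>
    ⟨fun t => (t : ℝ × ℝ).1 ^ p.1 * (t : ℝ × ℝ).2 ^ p.2, by fun_prop⟩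
  have hφcont : Continuous φ := continuous_of_discreteTopology
  have hφmeas : Measurable φ := hφcont.measurable
  -- the C(Q,ℝ)-valued random variables
  set Y : ℕ → Ω → C(Q, ℝ) := fun i ω => φ (X i ω) with hYdef
  have hYsm : ∀ i, StronglyMeasurable (Y i) := fun i =>
    hφcont.comp_stronglyMeasurable (hmeas i).stronglyMeasurable
  have hc : ((c₁, c₂) : ℝ × ℝ) ∈ W := hQW ⟨⟨hbc₁, le_refl _⟩, ⟨hbc₂, le_refl _⟩⟩
  have hg : Integrable (fun ω => c₁ ^ (X 0 ω).1 * c₂ ^ (X 0 ω).2) P := hW_int _ hc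
  have hnorm : ∀ i ω, ‖Y i ω‖ ≤ c₁ ^ (X i ω).1 * c₂ ^ (X i ω).2 := by
    intro i ω
    have hc₁ : 0 ≤ c₁ := hb₁.trans hbc₁
    have hc₂ : 0 ≤ c₂ := hb₂.trans hbc₂
    refine (ContinuousMap.norm_le _ (by positivity)).2 ?_
    rintro ⟨⟨t₁, t₂⟩, ⟨ht₁, ht₂⟩⟩
    have h0₁ : (0 : ℝ) ≤ t₁ := hb₁.trans ht₁.1
    have h0₂ : (0 : ℝ) ≤ t₂ := hb₂.trans ht₂.1
    simp only [Y, φ, ContinuousMap.coe_mk]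
    rw [Real.norm_eq_abs, abs_of_nonneg (by positivity)]
    exact mul_le_mul (pow_le_pow_left₀ h0₁ ht₁.2 _) (pow_le_pow_left₀ h0₂ ht₂.2 _)
      (by positivity) (by positivity)
  have hint : Integrable (Y 0) P :=
    Integrable.mono' hg (hYsm 0).aestronglyMeasurable (ae_of_all _ fun ω => hnorm 0 ω)
  have hindep' : Pairwise (Function.onFun (IndepFun · · P) Y) := fun i j hij =>
    (hindep.indepFun hij).comp hφmeas hφmeas
  have hident' : ∀ i, IdentDistrib (Y i) (Y 0) P P := fun i => (hident i).comp hφmeas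
  have hslln := strong_law_ae Y hint hindep' hident'
  -- identify the Bochner integral of Y 0 with v on Q
  have hEY : ∀ t : Q, (∫ ω, Y 0 ω ∂P) t = v t := by
    intro t
    have h := (ContinuousMap.evalCLM (R := ℝ) t).integral_comp_comm hint
    have h' : ∫ ω, (Y 0 ω) t ∂P = (∫ ω, Y 0 ω ∂P) t := h
    rw [← h', hv t (hQW t.2)]
    rfl
  filter_upwards [hslln] with ω hω
  have h0 : Tendsto
      (fun n : ℕ => ‖(n : ℝ)⁻¹ • ∑ i ∈ Finset.range n, Y i ω - ∫ ω, Y 0 ω ∂P‖)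
      atTop (nhds 0) := by
    have := (hω.sub (tendsto_const_nhds (x := ∫ ω, Y 0 ω ∂P))).norm
    simpa using this
  convert h0 using 2 with n
  rw [ContinuousMap.norm_eq_iSup_norm]
  refine iSup_congr fun t => ?_
  rw [Real.norm_eq_abs]
  congr 1
  rw [ContinuousMap.sub_apply, ContinuousMap.smul_apply, ContinuousMap.coe_sum,
    Finset.sum_apply, hEY t]
  simp [Y, φ]
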